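/- For each h > 0 the equation m = tanh(m + h) has exactly one real solution μ(h), and μ(h) ∈ (0,1). Moreover lim_{h→0⁺} μ(h)/(3h)^{1/3} = 1; that is, at the critical point the magnetization of the Curie–Weiss model vanishes with the external field with the classical critical exponent 1/3. -/

import Mathlib

open Real Filter

private lemma tanh_lt_one' (x : ℝ) : Real.tanh x < 1 := by
  rw [Real.tanh_eq_sinh_div_cosh, div_lt_one (Real.cosh_pos x)]
  exact Real.sinh_lt_cosh x

private lemma tanh_pos' {x : ℝ} (hx : 0 < x) : 0 < Real.tanh x := by
  rw [Real.tanh_eq_sinh_div_cosh]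
  exact div_pos (Real.sinh_pos_iff.mpr hx) (Real.cosh_pos x)

private lemma hasDerivAt_tanh' (x : ℝ) :
    HasDerivAt Real.tanh (1 / Real.cosh x ^ 2) x := by
  have h := (Real.hasDerivAt_sinh x).div (Real.hasDerivAt_cosh x) (Real.cosh_pos x).ne'
  have he : Real.tanh = fun y => Real.sinh y / Real.cosh y :=
    funext Real.tanh_eq_sinh_div_cosh
  rw [he]
  convert h using 1 <;> try rfl
  have hc := Real.cosh_sq_sub_sinh_sq x
  have : Real.cosh x * Real.cosh x - Real.sinh x * Real.sinh x = 1 := by nlinarith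
  rw [this]

private lemma tanh_strictMono' : StrictMono Real.tanh :=
  strictMono_of_deriv_pos fun x => by
    rw [(hasDerivAt_tanh' x).deriv]
    positivity

private lemma tanh_continuous' : Continuous Real.tanh := by
  have hd : Differentiable ℝ Real.tanh := fun x => (hasDerivAt_tanh' x).differentiableAt
  exact hd.continuous

private lemma le_tanh' {x : ℝ} (hx : x ≤ 0) : x ≤ Real.tanh x := by
  have hmono : Monotone (fun y => y - Real.tanh y) := by
    apply monotone_of_deriv_nonneg
    · exact differentiable_id.sub fun y => (hasDerivAt_tanh' y).differentiableAt
    · intro y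
      have hd : deriv (fun y => y - Real.tanh y) y = 1 - 1 / Real.cosh y ^ 2 :=
        ((hasDerivAt_id y).sub (hasDerivAt_tanh' y)).deriv
      rw [hd]
      have h1 : (1 : ℝ) ≤ Real.cosh y := Real.one_le_cosh y
      have h2 : 1 / Real.cosh y ^ 2 ≤ 1 := by
        rw [div_le_one (by positivity)]
        nlinarith
      linarith
  have h := hmono hx
  simp only [Real.tanh_zero, sub_zero, zero_sub] at h
  linarith

private lemma sol_mem' {h m : ℝ} (hh : 0 < h) (hm : m = Real.tanh (m + h)) :
    m ∈ Set.Ioo (0 : ℝ) 1 := by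
  constructor
  · by_contra hle
    push_neg at hle
    have h1 : Real.tanh m < Real.tanh (m + h) := tanh_strictMono' (by linarith)
    have h2 : m ≤ Real.tanh m := le_tanh' hle
    rw [← hm] at h1
    linarith
  · rw [hm]; exact tanh_lt_one' _

private lemma exists_sol' {h : ℝ} (hh : 0 < h) : ∃ m : ℝ, m = Real.tanh (m + h) := by
  have hc : ContinuousOn (fun m : ℝ => m - Real.tanh (m + h)) (Set.Icc 0 1) :=
    (continuous_id.sub (tanh_continuous'.comp (continuous_id.add continuous_const))).continuousOn
  have h0 : (fun m : ℝ => m - Real.tanh (m + h)) 0 ≤ 0 := by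
    simp only [zero_add, zero_sub, neg_nonpos]
    exact (tanh_pos' hh).le
  have h1 : (0 : ℝ) ≤ (fun m : ℝ => m - Real.tanh (m + h)) 1 := by
    simp only [sub_nonneg]
    exact (tanh_lt_one' _).le
  obtain ⟨m, _, hme⟩ := intermediate_value_Icc (by norm_num : (0:ℝ) ≤ 1) hc ⟨h0, h1⟩
  refine ⟨m, ?_⟩
  have h' : m - Real.tanh (m + h) = 0 := hme
  linarith

private lemma k_strictMonoOn {h : ℝ} (hh : 0 < h) :
    StrictMonoOn (fun m : ℝ => m - Real.tanh (m + h)) (Set.Ici 0) := by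
  apply strictMonoOn_of_deriv_pos (convex_Ici 0)
  · exact (continuous_id.sub
      (tanh_continuous'.comp (continuous_id.add continuous_const))).continuousOn
  · intro x hx
    rw [interior_Ici] at hx
    have hd : HasDerivAt (fun m : ℝ => m - Real.tanh (m + h))
        (1 - 1 / Real.cosh (x + h) ^ 2 * 1) x :=
      (hasDerivAt_id x).sub ((hasDerivAt_tanh' (x + h)).comp (h := fun m => m + h) x
        ((hasDerivAt_id' x).add_const h))
    rw [hd.deriv]
    have hc : 1 < Real.cosh (x + h) := Real.one_lt_cosh.mpr (ne_of_gt (by have hx0 := Set.mem_Ioi.mp hx; linarith : (0:ℝ) < x + h))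
    have : 1 / Real.cosh (x + h) ^ 2 < 1 := by
      rw [div_lt_one (by positivity)]
      nlinarith
    linarith

private lemma uniq' {h : ℝ} (hh : 0 < h) {a b : ℝ} (ha : a = Real.tanh (a + h))
    (hb : b = Real.tanh (b + h)) : a = b := by
  have ha0 := (sol_mem' hh ha).1
  have hb0 := (sol_mem' hh hb).1
  have : (fun m : ℝ => m - Real.tanh (m + h)) a = (fun m : ℝ => m - Real.tanh (m + h)) b := by
    simp only [← ha, ← hb, sub_self]
  exact (k_strictMonoOn hh).injOn (Set.mem_Ici.mpr ha0.le) (Set.mem_Ici.mpr hb0.le) this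

noncomputable def atanh' (m : ℝ) : ℝ := (Real.log (1 + m) - Real.log (1 - m)) / 2

private lemma tanh_eq_exp (x : ℝ) :
    Real.tanh x = (Real.exp (2 * x) - 1) / (Real.exp (2 * x) + 1) := by
  rw [Real.tanh_eq_sinh_div_cosh, Real.sinh_eq, Real.cosh_eq, Real.exp_neg]
  have h1 : Real.exp x ≠ 0 := (Real.exp_pos x).ne'
  have h2 : Real.exp (2 * x) = Real.exp x * Real.exp x := by
    rw [← Real.exp_add]; ring_nf
  have h3 : Real.exp (2 * x) + 1 ≠ 0 := by positivity
  rw [h2] at *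
  field_simp
  try ring

private lemma tanh_atanh' {m : ℝ} (h1 : -1 < m) (h2 : m < 1) :
    Real.tanh (atanh' m) = m := by
  have hp : (0 : ℝ) < 1 + m := by linarith
  have hq : (0 : ℝ) < 1 - m := by linarith
  rw [tanh_eq_exp]
  have he : 2 * atanh' m = Real.log ((1 + m) / (1 - m)) := by
    rw [atanh', Real.log_div hp.ne' hq.ne']; ring
  rw [he, Real.exp_log (by positivity)]
  have hne : (1 + m) / (1 - m) + 1 ≠ 0 := by positivity
  field_simp
  try ring

private lemma atanh'_zero : atanh' 0 = 0 := by simp [atanh']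

private lemma hasDerivAt_atanh' {m : ℝ} (h1 : -1 < m) (h2 : m < 1) :
    HasDerivAt atanh' (1 / (1 - m ^ 2)) m := by
  have hp : (0 : ℝ) < 1 + m := by linarith
  have hq : (0 : ℝ) < 1 - m := by linarith
  have d1 : HasDerivAt (fun y : ℝ => Real.log (1 + y)) (1 / (1 + m)) m := by
    have hb : HasDerivAt (fun y : ℝ => 1 + y) 1 m := (hasDerivAt_id m).const_add 1
    simpa using hb.log hp.ne'
  have d2 : HasDerivAt (fun y : ℝ => Real.log (1 - y)) (-1 / (1 - m)) m := by
    have hb : HasDerivAt (fun y : ℝ => 1 - y) (-1) m := (hasDerivAt_id m).const_sub 1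
    simpa using hb.log hq.ne'
  have hD := (d1.sub d2).div_const 2
  have : atanh' = fun y : ℝ => (Real.log (1 + y) - Real.log (1 - y)) / 2 := rfl
  rw [this]
  convert hD using 1 <;> try rfl
  have h12 : (1 : ℝ) - m ^ 2 = (1 + m) * (1 - m) := by ring
  rw [h12]
  field_simp
  ring

private lemma hasDerivAt_F {m : ℝ} (h1 : -1 < m) (h2 : m < 1) :
    HasDerivAt (fun y : ℝ => atanh' y - y - y ^ 3 / 3) (m ^ 4 / (1 - m ^ 2)) m := by
  have hD := ((hasDerivAt_atanh' h1 h2).sub (hasDerivAt_id m)).sub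
    ((hasDerivAt_pow 3 m).div_const 3)
  convert hD using 1 <;> try rfl
  have hq : (1 : ℝ) - m ^ 2 ≠ 0 := by nlinarith
  field_simp
  ring

private lemma hasDerivAt_G {m : ℝ} (h1 : -1 < m) (h2 : m < 1) :
    HasDerivAt (fun y : ℝ => y ^ 3 / (3 * (1 - y ^ 2)) - (atanh' y - y))
      (2 * m ^ 4 / (3 * (1 - m ^ 2) ^ 2)) m := by
  have hq : (0 : ℝ) < 1 - m ^ 2 := by nlinarith
  have hden : HasDerivAt (fun y : ℝ => 3 * (1 - y ^ 2)) (3 * -(2 * m ^ 1)) m := by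
    exact (((hasDerivAt_pow 2 m).const_sub 1).const_mul 3)
  have hnum : HasDerivAt (fun y : ℝ => y ^ 3) ((3 : ℕ) * m ^ 2) m := hasDerivAt_pow 3 m
  have hfrac := hnum.div hden (by positivity : 3 * (1 - m ^ 2) ≠ 0)
  have hD := hfrac.sub ((hasDerivAt_atanh' h1 h2).sub (hasDerivAt_id m))
  convert hD using 1 <;> try rfl
  field_simp
  ring

private lemma cube_bounds {h m : ℝ} (hh : 0 < h) (hm : m = Real.tanh (m + h)) :
    m ^ 3 ≤ 3 * h ∧ 3 * h * (1 - m ^ 2) ≤ m ^ 3 := by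
  obtain ⟨hm0, hm1⟩ := sol_mem' hh hm
  have hmm1 : -1 < m := by linarith
  have heq : atanh' m = m + h := by
    apply tanh_strictMono'.injective
    rw [tanh_atanh' hmm1 hm1]
    exact hm
  have hq : (0 : ℝ) < 1 - m ^ 2 := by nlinarith
  have hF : m ^ 3 / 3 ≤ atanh' m - m := by
    have hmono : StrictMonoOn (fun y : ℝ => atanh' y - y - y ^ 3 / 3) (Set.Ico 0 1) := by
      apply strictMonoOn_of_deriv_pos (convex_Ico 0 1)
      · intro y hy
        exact (hasDerivAt_F (by linarith [hy.1] : (-1:ℝ) < y) hy.2).continuousAt.continuousWithinAt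
      · intro y hy
        rw [interior_Ico] at hy
        rw [(hasDerivAt_F (by linarith [hy.1] : (-1:ℝ) < y) hy.2).deriv]
        have hy0 : (0:ℝ) < y := hy.1
        have : (0:ℝ) < 1 - y ^ 2 := by nlinarith [hy.2]
        positivity
    have := hmono (Set.mem_Ico.mpr ⟨le_refl 0, by norm_num⟩)
      (Set.mem_Ico.mpr ⟨hm0.le, hm1⟩) hm0
    simp only [atanh'_zero] at this
    norm_num at this
    linarith
  have hG : atanh' m - m ≤ m ^ 3 / (3 * (1 - m ^ 2)) := by
    have hmono : StrictMonoOn (fun y : ℝ => y ^ 3 / (3 * (1 - y ^ 2)) - (atanh' y - y))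
        (Set.Ico 0 1) := by
      apply strictMonoOn_of_deriv_pos (convex_Ico 0 1)
      · intro y hy
        exact (hasDerivAt_G (by linarith [hy.1] : (-1:ℝ) < y) hy.2).continuousAt.continuousWithinAt
      · intro y hy
        rw [interior_Ico] at hy
        rw [(hasDerivAt_G (by linarith [hy.1] : (-1:ℝ) < y) hy.2).deriv]
        have hy0 : (0:ℝ) < y := hy.1
        have : (0:ℝ) < 1 - y ^ 2 := by nlinarith [hy.2]
        positivity
    have := hmono (Set.mem_Ico.mpr ⟨le_refl 0, by norm_num⟩)
      (Set.mem_Ico.mpr ⟨hm0.le, hm1⟩) hm0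
    simp only [atanh'_zero] at this
    norm_num at this
    linarith
  constructor
  · have : m ^ 3 / 3 ≤ h := by rw [heq] at hF; linarith
    linarith
  · have : h ≤ m ^ 3 / (3 * (1 - m ^ 2)) := by rw [heq] at hG; linarith
    have := (le_div_iff₀ (by positivity : (0:ℝ) < 3 * (1 - m ^ 2))).mp this
    nlinarith

/-- Classical critical isotherm exponent `δ = 3` of the Curie–Weiss model: for each
`h > 0` the equation `m = tanh(m + h)` has exactly one real solution, it lies in
`(0,1)`, and any selection `μ(h)` of solutions satisfies `μ(h)/(3h)^{1/3} → 1`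
as `h → 0⁺`. -/
theorem curie_weiss_critical_isotherm :
    (∀ h : ℝ, 0 < h → ∃! m : ℝ, m = Real.tanh (m + h)) ∧
      (∀ h : ℝ, 0 < h → ∀ m : ℝ, m = Real.tanh (m + h) → m ∈ Set.Ioo (0 : ℝ) 1) ∧
      ∀ μ : ℝ → ℝ, (∀ h : ℝ, 0 < h → μ h = Real.tanh (μ h + h)) →
        Tendsto (fun h : ℝ => μ h / (3 * h) ^ ((1 : ℝ) / 3))
          (nhdsWithin 0 (Set.Ioi 0)) (nhds 1) := by
  refine ⟨?_, ?_, ?_⟩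
  · intro h hh
    obtain ⟨m, hm⟩ := exists_sol' hh
    exact ⟨m, hm, fun y hy => uniq' hh hy hm⟩
  · intro h hh m hm
    exact sol_mem' hh hm
  · intro μ hμ
    have key : ∀ h ∈ Set.Ioi (0 : ℝ),
        1 - (3 * h) ^ ((2 : ℝ) / 3) ≤ μ h / (3 * h) ^ ((1 : ℝ) / 3) ∧
          μ h / (3 * h) ^ ((1 : ℝ) / 3) ≤ 1 := by
      intro h hh
      rw [Set.mem_Ioi] at hh
      set m := μ h with hmdef
      obtain ⟨hm0, hm1⟩ := sol_mem' hh (hμ h hh)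
      obtain ⟨A, B⟩ := cube_bounds hh (hμ h hh)
      have h3 : (0 : ℝ) < 3 * h := by linarith
      have hr : (0 : ℝ) < (3 * h) ^ ((1 : ℝ) / 3) := Real.rpow_pos_of_pos h3 _
      have hcube : ∀ x : ℝ, 0 ≤ x → (x ^ 3) ^ ((1 : ℝ) / 3) = x := by
        intro x hx
        rw [← Real.rpow_natCast x 3, ← Real.rpow_mul hx]
        norm_num
      have hmle : m ≤ (3 * h) ^ ((1 : ℝ) / 3) := by
        have := Real.rpow_le_rpow (by positivity) A (by norm_num : (0:ℝ) ≤ 1 / 3)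
        rwa [hcube m hm0.le] at this
      have hupper : m / (3 * h) ^ ((1 : ℝ) / 3) ≤ 1 := (div_le_one hr).mpr hmle
      have h1m : (0 : ℝ) < 1 - m ^ 2 := by nlinarith
      have hlow1 : (3 * h) ^ ((1 : ℝ) / 3) * (1 - m ^ 2) ^ ((1 : ℝ) / 3) ≤ m := by
        have hB := Real.rpow_le_rpow (by positivity) B (by norm_num : (0:ℝ) ≤ 1 / 3)
        rwa [hcube m hm0.le, Real.mul_rpow h3.le h1m.le] at hB
      have hlow2 : 1 - m ^ 2 ≤ (1 - m ^ 2) ^ ((1 : ℝ) / 3) := by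
        have := Real.rpow_le_rpow_of_exponent_ge h1m (by nlinarith : 1 - m ^ 2 ≤ 1)
          (by norm_num : (1 : ℝ) / 3 ≤ 1)
        rwa [Real.rpow_one] at this
      have hm2 : m ^ 2 ≤ (3 * h) ^ ((2 : ℝ) / 3) := by
        have hsq : ((3 * h) ^ ((1 : ℝ) / 3)) ^ (2 : ℕ) = (3 * h) ^ ((2 : ℝ) / 3) := by
          rw [← Real.rpow_natCast ((3 * h) ^ ((1 : ℝ) / 3)) 2, ← Real.rpow_mul h3.le]
          norm_num
        calc m ^ 2 ≤ ((3 * h) ^ ((1 : ℝ) / 3)) ^ (2 : ℕ) :=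
              pow_le_pow_left₀ hm0.le hmle 2
          _ = (3 * h) ^ ((2 : ℝ) / 3) := hsq
      refine ⟨?_, hupper⟩
      have hstep : (1 - m ^ 2) ^ ((1 : ℝ) / 3) ≤ m / (3 * h) ^ ((1 : ℝ) / 3) := by
        rw [le_div_iff₀ hr, mul_comm]
        exact hlow1
      linarith
    have hlim : Tendsto (fun h : ℝ => 1 - (3 * h) ^ ((2 : ℝ) / 3))
        (nhdsWithin 0 (Set.Ioi 0)) (nhds 1) := by
      have h1 : Tendsto (fun h : ℝ => 3 * h) (nhdsWithin 0 (Set.Ioi 0)) (nhds 0) := by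
        have hc : Tendsto (fun h : ℝ => 3 * h) (nhds 0) (nhds 0) := by
          simpa using (continuous_mul_left (3 : ℝ)).tendsto (0 : ℝ)
        exact hc.mono_left nhdsWithin_le_nhds
      have h2 : Tendsto (fun x : ℝ => x ^ ((2 : ℝ) / 3)) (nhds 0) (nhds 0) := by
        have hc := (Real.continuousAt_rpow_const 0 (2 / 3) (Or.inr (by norm_num))).tendsto
        simpa [Real.zero_rpow (by norm_num : ((2 : ℝ) / 3) ≠ 0)] using hc
      have h3 := h2.comp h1
      have h4 := h3.const_sub 1
      simpa using h4
    refine tendsto_of_tendsto_of_tendsto_of_le_of_le' hlim tendsto_const_nhds ?_ ?_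
    · exact eventually_nhdsWithin_of_forall fun h hh => (key h hh).1
    · exact eventually_nhdsWithin_of_forall fun h hh => (key h hh).2
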